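/- The kernel of rho' : G_II -> S_5 is the normal closure in G_II of the three elements g1 g2 g4 g2, g2 g4 g1 g4, and (g2 g3 g4 g3)^2. -/
import Mathlib

set_option maxRecDepth 40000
set_option maxHeartbeats 1000000


namespace Stmt8

/-- Generators: `i ↦ g(i+1)` for `i = 0,…,4`. -/
def g (i : Fin 5) : FreeGroup (Fin 5) := FreeGroup.of i

/-- The braid relator `x y x (y x y)⁻¹`, i.e. `<x,y> = e`. -/
def braid (x y : FreeGroup (Fin 5)) : FreeGroup (Fin 5) := x * y * x * (y * x * y)⁻¹

/-- The commutator relator `x y x⁻¹ y⁻¹`, i.e. `[x,y] = e`. -/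
def comm (x y : FreeGroup (Fin 5)) : FreeGroup (Fin 5) := x * y * x⁻¹ * y⁻¹

/-- Relators of the group `G_II` from Theorem 3.5 (union of the Cayley cubic degeneration
and two planes, Type II). -/
def rels : Set (FreeGroup (Fin 5)) :=
  { (g 0) ^ 2, (g 1) ^ 2, (g 2) ^ 2, (g 3) ^ 2, (g 4) ^ 2,
    comm (g 0) (g 2), comm (g 0) (g 4), comm (g 1) (g 4),
    comm (g 0) (g 1 * g 3 * g 1), comm (g 3) (g 4),
    braid (g 0) (g 1), braid (g 1) (g 2), braid (g 1) (g 3),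
    braid (g 2) (g 3), braid (g 2) (g 4) }

/-- The presented group `G_II`. -/
abbrev GII := PresentedGroup rels

/-- Normal form candidates for an A4-Coxeter-generated group. -/
def FF {G : Type*} [Group G] (s1 s2 s3 s4 : G) (t : Fin 2 × Fin 3 × Fin 4 × Fin 5) : G :=
  ![1, s1] t.1 * ![1, s2, s2*s1] t.2.1 * ![1, s3, s3*s2, s3*s2*s1] t.2.2.1 *
    ![1, s4, s4*s3, s4*s3*s2, s4*s3*s2*s1] t.2.2.2

theorem cover {G : Type*} [Group G] (s1 s2 s3 s4 : G)
    (sq1 : s1*s1 = 1) (sq2 : s2*s2 = 1) (sq3 : s3*s3 = 1) (sq4 : s4*s4 = 1)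
    (b12 : s1*s2*s1 = s2*s1*s2) (b23 : s2*s3*s2 = s3*s2*s3) (b34 : s3*s4*s3 = s4*s3*s4)
    (c13 : s1*s3 = s3*s1) (c14 : s1*s4 = s4*s1) (c24 : s2*s4 = s4*s2) :
    ∀ x ∈ Subgroup.closure ({s1, s2, s3, s4} : Set G),
      ∃ t : Fin 2 × Fin 3 × Fin 4 × Fin 5, FF s1 s2 s3 s4 t = x := by
  -- derived helpers
  have tq1 : ∀ x : G, s1*(s1*x) = x := fun x => by rw [← mul_assoc, sq1, one_mul]
  have tq2 : ∀ x : G, s2*(s2*x) = x := fun x => by rw [← mul_assoc, sq2, one_mul]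
  have tq3 : ∀ x : G, s3*(s3*x) = x := fun x => by rw [← mul_assoc, sq3, one_mul]
  have tq4 : ∀ x : G, s4*(s4*x) = x := fun x => by rw [← mul_assoc, sq4, one_mul]
  have a12 : s1*(s2*s1) = s2*(s1*s2) := by simpa [mul_assoc] using b12
  have a23 : s2*(s3*s2) = s3*(s2*s3) := by simpa [mul_assoc] using b23
  have a34 : s3*(s4*s3) = s4*(s3*s4) := by simpa [mul_assoc] using b34
  have c31t : ∀ x : G, s3*(s1*x) = s1*(s3*x) := fun x => by
    rw [← mul_assoc, ← c13, mul_assoc]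
  have c41t : ∀ x : G, s4*(s1*x) = s1*(s4*x) := fun x => by
    rw [← mul_assoc, ← c14, mul_assoc]
  have c42t : ∀ x : G, s4*(s2*x) = s2*(s4*x) := fun x => by
    rw [← mul_assoc, ← c24, mul_assoc]
  have c24t : ∀ x : G, s2*(s4*x) = s4*(s2*x) := fun x => by
    rw [← mul_assoc, c24, mul_assoc]
  have t23' : ∀ x : G, s3*(s2*(s3*x)) = s2*(s3*(s2*x)) := fun x => by
    simp only [← mul_assoc]; rw [← b23]
  have t34' : ∀ x : G, s4*(s3*(s4*x)) = s3*(s4*(s3*x)) := fun x => by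
    simp only [← mul_assoc]; rw [← b34]
  -- level lemmas
  have lev1 : ∀ j : Fin 2, ∃ k : Fin 2, ![(1:G), s1] j * s1 = ![(1:G), s1] k := by
    intro j
    fin_cases j
    · exact ⟨1, by show (1:G)*s1 = s1; rw [one_mul]⟩
    · exact ⟨0, by show s1*s1 = 1; exact sq1⟩
  have lev2 : ∀ (j : Fin 3) (i : Fin 2),
      (∃ k : Fin 3, ![(1:G), s2, s2*s1] j * ![s1, s2] i = ![(1:G), s2, s2*s1] k) ∨
      (∃ k : Fin 3, ![(1:G), s2, s2*s1] j * ![s1, s2] i = s1 * ![(1:G), s2, s2*s1] k) := by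
    intro j i
    fin_cases j <;> fin_cases i
    · exact Or.inr ⟨0, by show (1:G)*s1 = s1*1; rw [one_mul, mul_one]⟩
    · exact Or.inl ⟨1, by show (1:G)*s2 = s2; rw [one_mul]⟩
    · exact Or.inl ⟨2, by show s2*s1 = s2*s1; rfl⟩
    · exact Or.inl ⟨0, by show s2*s2 = 1; exact sq2⟩
    · exact Or.inl ⟨1, by show (s2*s1)*s1 = s2; rw [mul_assoc, sq1, mul_one]⟩
    · exact Or.inr ⟨2, by show (s2*s1)*s2 = s1*(s2*s1); simp only [mul_assoc]; rw [← a12]⟩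
  have lev3 : ∀ (j : Fin 4) (i : Fin 3),
      (∃ k : Fin 4, ![(1:G), s3, s3*s2, s3*s2*s1] j * ![s1, s2, s3] i
          = ![(1:G), s3, s3*s2, s3*s2*s1] k) ∨
      (∃ (i' : Fin 2) (k : Fin 4), ![(1:G), s3, s3*s2, s3*s2*s1] j * ![s1, s2, s3] i
          = ![s1, s2] i' * ![(1:G), s3, s3*s2, s3*s2*s1] k) := by
    intro j i
    fin_cases j <;> fin_cases i
    · exact Or.inr ⟨0, 0, by show (1:G)*s1 = s1*1; rw [one_mul, mul_one]⟩
    · exact Or.inr ⟨1, 0, by show (1:G)*s2 = s2*1; rw [one_mul, mul_one]⟩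
    · exact Or.inl ⟨1, by show (1:G)*s3 = s3; rw [one_mul]⟩
    · exact Or.inr ⟨0, 1, by show s3*s1 = s1*s3; exact c13.symm⟩
    · exact Or.inl ⟨2, rfl⟩
    · exact Or.inl ⟨0, by show s3*s3 = 1; exact sq3⟩
    · exact Or.inl ⟨3, rfl⟩
    · exact Or.inl ⟨1, by show (s3*s2)*s2 = s3; rw [mul_assoc, sq2, mul_one]⟩
    · exact Or.inr ⟨1, 2, by show (s3*s2)*s3 = s2*(s3*s2); simp only [mul_assoc]; rw [← a23]⟩
    · exact Or.inl ⟨2, by show (s3*s2*s1)*s1 = s3*s2; rw [mul_assoc, sq1, mul_one]⟩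
    · exact Or.inr ⟨0, 3, by
        show (s3*s2*s1)*s2 = s1*(s3*s2*s1)
        simp only [mul_assoc]; rw [← a12, c31t]⟩
    · exact Or.inr ⟨1, 3, by
        show (s3*s2*s1)*s3 = s2*(s3*s2*s1)
        simp only [mul_assoc]; rw [c13, t23']⟩
  have lev4 : ∀ (j : Fin 5) (i : Fin 4),
      (∃ k : Fin 5, ![(1:G), s4, s4*s3, s4*s3*s2, s4*s3*s2*s1] j * ![s1, s2, s3, s4] i
          = ![(1:G), s4, s4*s3, s4*s3*s2, s4*s3*s2*s1] k) ∨
      (∃ (i' : Fin 3) (k : Fin 5),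
          ![(1:G), s4, s4*s3, s4*s3*s2, s4*s3*s2*s1] j * ![s1, s2, s3, s4] i
          = ![s1, s2, s3] i' * ![(1:G), s4, s4*s3, s4*s3*s2, s4*s3*s2*s1] k) := by
    intro j i
    fin_cases j <;> fin_cases i
    · exact Or.inr ⟨0, 0, by show (1:G)*s1 = s1*1; rw [one_mul, mul_one]⟩
    · exact Or.inr ⟨1, 0, by show (1:G)*s2 = s2*1; rw [one_mul, mul_one]⟩
    · exact Or.inr ⟨2, 0, by show (1:G)*s3 = s3*1; rw [one_mul, mul_one]⟩
    · exact Or.inl ⟨1, by show (1:G)*s4 = s4; rw [one_mul]⟩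
    · exact Or.inr ⟨0, 1, by show s4*s1 = s1*s4; exact c14.symm⟩
    · exact Or.inr ⟨1, 1, by show s4*s2 = s2*s4; exact c24.symm⟩
    · exact Or.inl ⟨2, rfl⟩
    · exact Or.inl ⟨0, by show s4*s4 = 1; exact sq4⟩
    · exact Or.inr ⟨0, 2, by
        show (s4*s3)*s1 = s1*(s4*s3)
        simp only [mul_assoc]; rw [← c13, c41t]⟩
    · exact Or.inl ⟨3, rfl⟩
    · exact Or.inl ⟨1, by show (s4*s3)*s3 = s4; rw [mul_assoc, sq3, mul_one]⟩
    · exact Or.inr ⟨2, 2, by show (s4*s3)*s4 = s3*(s4*s3); simp only [mul_assoc]; rw [← a34]⟩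
    · exact Or.inl ⟨4, rfl⟩
    · exact Or.inl ⟨2, by show (s4*s3*s2)*s2 = s4*s3; rw [mul_assoc, sq2, mul_one]⟩
    · exact Or.inr ⟨1, 3, by
        show (s4*s3*s2)*s3 = s2*(s4*s3*s2)
        simp only [mul_assoc]; rw [← a23, c42t]⟩
    · exact Or.inr ⟨2, 3, by
        show (s4*s3*s2)*s4 = s3*(s4*s3*s2)
        simp only [mul_assoc]; rw [c24, t34']⟩
    · exact Or.inl ⟨3, by show (s4*s3*s2*s1)*s1 = s4*s3*s2; rw [mul_assoc, sq1, mul_one]⟩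
    · exact Or.inr ⟨0, 4, by
        show (s4*s3*s2*s1)*s2 = s1*(s4*s3*s2*s1)
        simp only [mul_assoc]; rw [← a12, c31t, c41t]⟩
    · exact Or.inr ⟨1, 4, by
        show (s4*s3*s2*s1)*s3 = s2*(s4*s3*s2*s1)
        simp only [mul_assoc]; rw [c13, t23', c42t]⟩
    · exact Or.inr ⟨2, 4, by
        show (s4*s3*s2*s1)*s4 = s3*(s4*s3*s2*s1)
        simp only [mul_assoc]; rw [c14, c24t, t34']⟩
  -- cumulative step lemmas
  have step2 : ∀ (j1 : Fin 2) (j2 : Fin 3) (i : Fin 2),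
      ∃ (k1 : Fin 2) (k2 : Fin 3),
        (![(1:G), s1] j1 * ![(1:G), s2, s2*s1] j2) * ![s1, s2] i
          = ![(1:G), s1] k1 * ![(1:G), s2, s2*s1] k2 := by
    intro j1 j2 i
    rcases lev2 j2 i with ⟨k, hk⟩ | ⟨k, hk⟩
    · exact ⟨j1, k, by rw [mul_assoc, hk]⟩
    · obtain ⟨k1, hk1⟩ := lev1 j1
      exact ⟨k1, k, by rw [mul_assoc, hk, ← mul_assoc, hk1]⟩
  have step3 : ∀ (j1 : Fin 2) (j2 : Fin 3) (j3 : Fin 4) (i : Fin 3),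
      ∃ (k1 : Fin 2) (k2 : Fin 3) (k3 : Fin 4),
        (![(1:G), s1] j1 * ![(1:G), s2, s2*s1] j2 * ![(1:G), s3, s3*s2, s3*s2*s1] j3)
            * ![s1, s2, s3] i
          = ![(1:G), s1] k1 * ![(1:G), s2, s2*s1] k2 * ![(1:G), s3, s3*s2, s3*s2*s1] k3 := by
    intro j1 j2 j3 i
    rcases lev3 j3 i with ⟨k, hk⟩ | ⟨i', k, hk⟩
    · exact ⟨j1, j2, k, by rw [mul_assoc, hk]⟩
    · obtain ⟨k1, k2, h2⟩ := step2 j1 j2 i'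
      exact ⟨k1, k2, k, by rw [mul_assoc, hk, ← mul_assoc, h2]⟩
  have step4 : ∀ (t : Fin 2 × Fin 3 × Fin 4 × Fin 5) (i : Fin 4),
      ∃ t' : Fin 2 × Fin 3 × Fin 4 × Fin 5,
        FF s1 s2 s3 s4 t' = FF s1 s2 s3 s4 t * ![s1, s2, s3, s4] i := by
    rintro ⟨j1, j2, j3, j4⟩ i
    rcases lev4 j4 i with ⟨k, hk⟩ | ⟨i', k, hk⟩
    · exact ⟨(j1, j2, j3, k), by unfold FF; conv_rhs => rw [mul_assoc, hk]⟩
    · obtain ⟨k1, k2, k3, h3⟩ := step3 j1 j2 j3 i'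
      exact ⟨(k1, k2, k3, k), by unfold FF; conv_rhs => rw [mul_assoc, hk, ← mul_assoc, h3]⟩
  -- closure induction
  intro x hx
  refine Subgroup.closure_induction_right ?_ ?_ ?_ hx
  · exact ⟨(0, 0, 0, 0), by unfold FF; simp⟩
  · rintro y hy z hz ⟨t, rfl⟩
    simp only [Set.mem_insert_iff, Set.mem_singleton_iff] at hz
    rcases hz with rfl | rfl | rfl | rfl
    · exact (step4 t 0).imp fun t' ht' => ht'
    · exact (step4 t 1).imp fun t' ht' => ht'
    · exact (step4 t 2).imp fun t' ht' => ht'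
    · exact (step4 t 3).imp fun t' ht' => ht'
  · rintro y hy z hz ⟨t, rfl⟩
    simp only [Set.mem_insert_iff, Set.mem_singleton_iff] at hz
    have i1 : s1⁻¹ = s1 := inv_eq_of_mul_eq_one_right sq1
    have i2 : s2⁻¹ = s2 := inv_eq_of_mul_eq_one_right sq2
    have i3 : s3⁻¹ = s3 := inv_eq_of_mul_eq_one_right sq3
    have i4 : s4⁻¹ = s4 := inv_eq_of_mul_eq_one_right sq4
    rcases hz with rfl | rfl | rfl | rfl
    · rw [i1]; exact (step4 t 0).imp fun t' ht' => ht'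
    · rw [i2]; exact (step4 t 1).imp fun t' ht' => ht'
    · rw [i3]; exact (step4 t 2).imp fun t' ht' => ht'
    · rw [i4]; exact (step4 t 3).imp fun t' ht' => ht'


/-- Theorem 3.5 (kernel description): for the homomorphism `ρ' : G_II → S₅` determined by
`g1 ↦ (1 2)`, `g2 ↦ (1 3)`, `g3 ↦ (3 4)`, `g4 ↦ (2 3)`, `g5 ↦ (4 5)`, the kernel of `ρ'`
is the normal closure of `g1 g2 g4 g2`, `g2 g4 g1 g4`, and `(g2 g3 g4 g3)²`. -/
theorem ker_eq_normalClosure (ρ' : GII →* Equiv.Perm (Fin 5))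
    (h1 : ρ' (PresentedGroup.of 0) = Equiv.swap 0 1)
    (h2 : ρ' (PresentedGroup.of 1) = Equiv.swap 0 2)
    (h3 : ρ' (PresentedGroup.of 2) = Equiv.swap 2 3)
    (h4 : ρ' (PresentedGroup.of 3) = Equiv.swap 1 2)
    (h5 : ρ' (PresentedGroup.of 4) = Equiv.swap 3 4) :
    MonoidHom.ker ρ' = Subgroup.normalClosure
      { (PresentedGroup.of 0 * PresentedGroup.of 1 * PresentedGroup.of 3
          * PresentedGroup.of 1 : GII),
        (PresentedGroup.of 1 * PresentedGroup.of 3 * PresentedGroup.of 0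
          * PresentedGroup.of 3 : GII),
        (PresentedGroup.of 1 * PresentedGroup.of 2 * PresentedGroup.of 3
          * PresentedGroup.of 2 : GII) ^ 2 } := by
  set E : Set GII :=
      { (PresentedGroup.of 0 * PresentedGroup.of 1 * PresentedGroup.of 3
          * PresentedGroup.of 1 : GII),
        (PresentedGroup.of 1 * PresentedGroup.of 3 * PresentedGroup.of 0
          * PresentedGroup.of 3 : GII),
        (PresentedGroup.of 1 * PresentedGroup.of 2 * PresentedGroup.of 3
          * PresentedGroup.of 2 : GII) ^ 2 } with hE
  set N : Subgroup GII := Subgroup.normalClosure E with hNdef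
  haveI hNorm : N.Normal := Subgroup.normalClosure_normal
  -- relator consequences in GII
  have hrel : ∀ r ∈ rels, PresentedGroup.mk rels r = (1 : GII) := fun r hr =>
    (QuotientGroup.eq_one_iff r).mpr (Subgroup.subset_normalClosure hr)
  have sq0 : (PresentedGroup.of 0 : GII) * PresentedGroup.of 0 = 1 := by
    have h := hrel ((g 0) ^ 2) (by simp [rels]); rw [map_pow, pow_two] at h; exact h
  have sq1 : (PresentedGroup.of 1 : GII) * PresentedGroup.of 1 = 1 := by
    have h := hrel ((g 1) ^ 2) (by simp [rels]); rw [map_pow, pow_two] at h; exact h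
  have sq2 : (PresentedGroup.of 2 : GII) * PresentedGroup.of 2 = 1 := by
    have h := hrel ((g 2) ^ 2) (by simp [rels]); rw [map_pow, pow_two] at h; exact h
  have sq3 : (PresentedGroup.of 3 : GII) * PresentedGroup.of 3 = 1 := by
    have h := hrel ((g 3) ^ 2) (by simp [rels]); rw [map_pow, pow_two] at h; exact h
  have sq4 : (PresentedGroup.of 4 : GII) * PresentedGroup.of 4 = 1 := by
    have h := hrel ((g 4) ^ 2) (by simp [rels]); rw [map_pow, pow_two] at h; exact h
  have hb13 : (PresentedGroup.of 1 : GII) * PresentedGroup.of 3 * PresentedGroup.of 1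
      = PresentedGroup.of 3 * PresentedGroup.of 1 * PresentedGroup.of 3 := by
    have h := hrel (braid (g 1) (g 3)) (by simp [rels])
    simp only [braid, map_mul, map_inv] at h
    exact mul_inv_eq_one.mp h
  have hb23 : (PresentedGroup.of 2 : GII) * PresentedGroup.of 3 * PresentedGroup.of 2
      = PresentedGroup.of 3 * PresentedGroup.of 2 * PresentedGroup.of 3 := by
    have h := hrel (braid (g 2) (g 3)) (by simp [rels])
    simp only [braid, map_mul, map_inv] at h
    exact mul_inv_eq_one.mp h
  have hb24 : (PresentedGroup.of 2 : GII) * PresentedGroup.of 4 * PresentedGroup.of 2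
      = PresentedGroup.of 4 * PresentedGroup.of 2 * PresentedGroup.of 4 := by
    have h := hrel (braid (g 2) (g 4)) (by simp [rels])
    simp only [braid, map_mul, map_inv] at h
    exact mul_inv_eq_one.mp h
  have hc02 : (PresentedGroup.of 0 : GII) * PresentedGroup.of 2
      = PresentedGroup.of 2 * PresentedGroup.of 0 := by
    have h := hrel (comm (g 0) (g 2)) (by simp [rels])
    simp only [comm, map_mul, map_inv] at h
    rw [mul_inv_eq_one, mul_inv_eq_iff_eq_mul] at h
    exact h
  have hc04 : (PresentedGroup.of 0 : GII) * PresentedGroup.of 4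
      = PresentedGroup.of 4 * PresentedGroup.of 0 := by
    have h := hrel (comm (g 0) (g 4)) (by simp [rels])
    simp only [comm, map_mul, map_inv] at h
    rw [mul_inv_eq_one, mul_inv_eq_iff_eq_mul] at h
    exact h
  have hc34 : (PresentedGroup.of 3 : GII) * PresentedGroup.of 4
      = PresentedGroup.of 4 * PresentedGroup.of 3 := by
    have h := hrel (comm (g 3) (g 4)) (by simp [rels])
    simp only [comm, map_mul, map_inv] at h
    rw [mul_inv_eq_one, mul_inv_eq_iff_eq_mul] at h
    exact h
  -- N ≤ ker ρ'
  have hNle : N ≤ MonoidHom.ker ρ' := by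
    rw [hNdef]
    apply Subgroup.normalClosure_le_normal
    rintro y hy
    rw [hE] at hy
    simp only [Set.mem_insert_iff, Set.mem_singleton_iff] at hy
    rcases hy with rfl | rfl | rfl
    · refine MonoidHom.mem_ker.mpr ?_
      simp only [map_mul, h1, h2, h4]
      decide
    · refine MonoidHom.mem_ker.mpr ?_
      simp only [map_mul, h1, h2, h4]
      decide
    · refine MonoidHom.mem_ker.mpr ?_
      simp only [map_pow, map_mul, h2, h3, h4]
      decide
  refine le_antisymm ?_ hNle
  -- quotient setup
  intro x hx
  let π : GII →* GII ⧸ N := QuotientGroup.mk' N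
  let ρbar : GII ⧸ N →* Equiv.Perm (Fin 5) :=
    QuotientGroup.lift N ρ' (fun y hy => MonoidHom.mem_ker.mp (hNle hy))
  have hπ : ∀ y : GII, ρbar (π y) = ρ' y := fun y => rfl
  -- images of generators
  have sqQ0 : π (PresentedGroup.of 0) * π (PresentedGroup.of 0) = 1 := by
    rw [← map_mul, sq0, map_one]
  have sqQ1 : π (PresentedGroup.of 1) * π (PresentedGroup.of 1) = 1 := by
    rw [← map_mul, sq1, map_one]
  have sqQ2 : π (PresentedGroup.of 2) * π (PresentedGroup.of 2) = 1 := by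
    rw [← map_mul, sq2, map_one]
  have sqQ3 : π (PresentedGroup.of 3) * π (PresentedGroup.of 3) = 1 := by
    rw [← map_mul, sq3, map_one]
  have sqQ4 : π (PresentedGroup.of 4) * π (PresentedGroup.of 4) = 1 := by
    rw [← map_mul, sq4, map_one]
  have invQ1 : (π (PresentedGroup.of 1))⁻¹ = π (PresentedGroup.of 1) :=
    inv_eq_of_mul_eq_one_right sqQ1
  have invQ3 : (π (PresentedGroup.of 3))⁻¹ = π (PresentedGroup.of 3) :=
    inv_eq_of_mul_eq_one_right sqQ3
  have b13Q : π (PresentedGroup.of 1) * π (PresentedGroup.of 3) * π (PresentedGroup.of 1)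
      = π (PresentedGroup.of 3) * π (PresentedGroup.of 1) * π (PresentedGroup.of 3) := by
    rw [← map_mul, ← map_mul, ← map_mul, ← map_mul, hb13]
  have b23Q : π (PresentedGroup.of 2) * π (PresentedGroup.of 3) * π (PresentedGroup.of 2)
      = π (PresentedGroup.of 3) * π (PresentedGroup.of 2) * π (PresentedGroup.of 3) := by
    rw [← map_mul, ← map_mul, ← map_mul, ← map_mul, hb23]
  have b24Q : π (PresentedGroup.of 2) * π (PresentedGroup.of 4) * π (PresentedGroup.of 2)
      = π (PresentedGroup.of 4) * π (PresentedGroup.of 2) * π (PresentedGroup.of 4) := by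
    rw [← map_mul, ← map_mul, ← map_mul, ← map_mul, hb24]
  have c02Q : π (PresentedGroup.of 0) * π (PresentedGroup.of 2)
      = π (PresentedGroup.of 2) * π (PresentedGroup.of 0) := by
    rw [← map_mul, ← map_mul, hc02]
  have c04Q : π (PresentedGroup.of 0) * π (PresentedGroup.of 4)
      = π (PresentedGroup.of 4) * π (PresentedGroup.of 0) := by
    rw [← map_mul, ← map_mul, hc04]
  have c34Q : π (PresentedGroup.of 3) * π (PresentedGroup.of 4)
      = π (PresentedGroup.of 4) * π (PresentedGroup.of 3) := by
    rw [← map_mul, ← map_mul, hc34]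
  -- extra relations from N
  have hEmem : ∀ y ∈ E, π y = 1 := fun y hy =>
    (QuotientGroup.eq_one_iff y).mpr (hNdef ▸ Subgroup.subset_normalClosure hy)
  have hxe1 : π (PresentedGroup.of 0) * π (PresentedGroup.of 1) * π (PresentedGroup.of 3)
      * π (PresentedGroup.of 1) = 1 := by
    have h := hEmem _ (by rw [hE]; exact Set.mem_insert _ _)
    simpa only [map_mul] using h
  have hxe2 : π (PresentedGroup.of 1) * π (PresentedGroup.of 3) * π (PresentedGroup.of 0)
      * π (PresentedGroup.of 3) = 1 := by
    have h := hEmem _ (by rw [hE]; exact Set.mem_insert_iff.mpr (Or.inr (Set.mem_insert _ _)))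
    simpa only [map_mul] using h
  -- derived relations
  have E1 : π (PresentedGroup.of 0)
      = π (PresentedGroup.of 1) * π (PresentedGroup.of 3) * π (PresentedGroup.of 1) := by
    have h : π (PresentedGroup.of 0) * (π (PresentedGroup.of 1) * π (PresentedGroup.of 3)
        * π (PresentedGroup.of 1)) = 1 := by
      simpa only [mul_assoc] using hxe1
    have h' := mul_eq_one_iff_eq_inv.mp h
    rw [mul_inv_rev, mul_inv_rev, invQ1, invQ3] at h'
    rw [h', mul_assoc]
  have E2 : π (PresentedGroup.of 0)
      = π (PresentedGroup.of 3) * π (PresentedGroup.of 1) * π (PresentedGroup.of 3) := by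
    have h : (π (PresentedGroup.of 1) * π (PresentedGroup.of 3)) * π (PresentedGroup.of 0)
        = π (PresentedGroup.of 3) := by
      have h' := mul_eq_one_iff_eq_inv.mp hxe2
      rw [invQ3] at h'
      exact h'
    have h'' := eq_inv_mul_iff_mul_eq.mpr h
    rw [mul_inv_rev, invQ1, invQ3] at h''
    rw [h'']
  have tq1Q : ∀ y : GII ⧸ N, π (PresentedGroup.of 1) * (π (PresentedGroup.of 1) * y) = y :=
    fun y => by rw [← mul_assoc, sqQ1, one_mul]
  have tq3Q : ∀ y : GII ⧸ N, π (PresentedGroup.of 3) * (π (PresentedGroup.of 3) * y) = y :=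
    fun y => by rw [← mul_assoc, sqQ3, one_mul]
  have haux1 : π (PresentedGroup.of 3) * π (PresentedGroup.of 0) * π (PresentedGroup.of 3)
      = π (PresentedGroup.of 1) := by
    rw [E2]
    simp only [mul_assoc]
    rw [tq3Q, sqQ3, mul_one]
  have haux2 : π (PresentedGroup.of 0) * π (PresentedGroup.of 3) * π (PresentedGroup.of 0)
      = π (PresentedGroup.of 1) := by
    nth_rewrite 1 [E1]
    rw [E2]
    simp only [mul_assoc]
    rw [tq3Q, tq1Q, sqQ3, mul_one]
  have bS12 : π (PresentedGroup.of 0) * π (PresentedGroup.of 3) * π (PresentedGroup.of 0)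
      = π (PresentedGroup.of 3) * π (PresentedGroup.of 0) * π (PresentedGroup.of 3) := by
    rw [haux2, haux1]
  -- coverage of the quotient by normal forms
  have hcover := cover (π (PresentedGroup.of 0)) (π (PresentedGroup.of 3))
    (π (PresentedGroup.of 2)) (π (PresentedGroup.of 4))
    sqQ0 sqQ3 sqQ2 sqQ4 bS12 b23Q.symm b24Q c02Q c04Q c34Q
  have hgen : ∀ q : GII ⧸ N, q ∈ Subgroup.closure
      ({π (PresentedGroup.of 0), π (PresentedGroup.of 3),
        π (PresentedGroup.of 2), π (PresentedGroup.of 4)} : Set (GII ⧸ N)) := by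
    intro q
    obtain ⟨y, rfl⟩ := QuotientGroup.mk'_surjective N q
    refine PresentedGroup.generated_by rels
      (Subgroup.comap π (Subgroup.closure _)) (fun j => ?_) y
    have m0 : π (PresentedGroup.of 0) ∈ Subgroup.closure
        ({π (PresentedGroup.of 0), π (PresentedGroup.of 3),
          π (PresentedGroup.of 2), π (PresentedGroup.of 4)} : Set (GII ⧸ N)) :=
      Subgroup.subset_closure (by simp)
    have m3 : π (PresentedGroup.of 3) ∈ Subgroup.closure
        ({π (PresentedGroup.of 0), π (PresentedGroup.of 3),
          π (PresentedGroup.of 2), π (PresentedGroup.of 4)} : Set (GII ⧸ N)) :=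
      Subgroup.subset_closure (by simp)
    fin_cases j
    · exact m0
    · refine Subgroup.mem_comap.mpr ?_
      have hmem : π (PresentedGroup.of 1) ∈ Subgroup.closure
          ({π (PresentedGroup.of 0), π (PresentedGroup.of 3),
            π (PresentedGroup.of 2), π (PresentedGroup.of 4)} : Set (GII ⧸ N)) :=
        haux2 ▸ Subgroup.mul_mem _ (Subgroup.mul_mem _ m0 m3) m0
      exact hmem
    · exact Subgroup.subset_closure (by simp)
    · exact m3
    · exact Subgroup.subset_closure (by simp)
  -- permutation-level injectivity data
  have hone : ∀ t : Fin 2 × Fin 3 × Fin 4 × Fin 5,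
      FF (Equiv.swap (0 : Fin 5) 1) (Equiv.swap 1 2) (Equiv.swap 2 3) (Equiv.swap 3 4) t = 1 →
      t = (0, 0, 0, 0) := by decide
  -- ρbar of generator images
  have hX0 : ρbar (π (PresentedGroup.of 0)) = Equiv.swap 0 1 := by rw [hπ, h1]
  have hX3 : ρbar (π (PresentedGroup.of 3)) = Equiv.swap 1 2 := by rw [hπ, h4]
  have hX2 : ρbar (π (PresentedGroup.of 2)) = Equiv.swap 2 3 := by rw [hπ, h3]
  have hX4 : ρbar (π (PresentedGroup.of 4)) = Equiv.swap 3 4 := by rw [hπ, h5]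
  have hc1 : ∀ j : Fin 2, ρbar (![1, π (PresentedGroup.of 0)] j)
      = ![1, Equiv.swap 0 1] j := by
    intro j; fin_cases j
    · simp
    · simpa using hX0
  have hc2 : ∀ j : Fin 3, ρbar (![1, π (PresentedGroup.of 3),
        π (PresentedGroup.of 3) * π (PresentedGroup.of 0)] j)
      = ![1, Equiv.swap 1 2, Equiv.swap 1 2 * Equiv.swap 0 1] j := by
    intro j; fin_cases j
    · simp
    · simpa using hX3
    · simpa [map_mul, hX0, hX3] using rfl
  have hc3 : ∀ j : Fin 4, ρbar (![1, π (PresentedGroup.of 2),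
        π (PresentedGroup.of 2) * π (PresentedGroup.of 3),
        π (PresentedGroup.of 2) * π (PresentedGroup.of 3) * π (PresentedGroup.of 0)] j)
      = ![1, Equiv.swap 2 3, Equiv.swap 2 3 * Equiv.swap 1 2,
          Equiv.swap 2 3 * Equiv.swap 1 2 * Equiv.swap 0 1] j := by
    intro j; fin_cases j
    · simp
    · simpa using hX2
    · simp [map_mul, hX2, hX3]
    · simp [map_mul, hX0, hX2, hX3]
  have hc4 : ∀ j : Fin 5, ρbar (![1, π (PresentedGroup.of 4),
        π (PresentedGroup.of 4) * π (PresentedGroup.of 2),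
        π (PresentedGroup.of 4) * π (PresentedGroup.of 2) * π (PresentedGroup.of 3),
        π (PresentedGroup.of 4) * π (PresentedGroup.of 2) * π (PresentedGroup.of 3)
          * π (PresentedGroup.of 0)] j)
      = ![1, Equiv.swap 3 4, Equiv.swap 3 4 * Equiv.swap 2 3,
          Equiv.swap 3 4 * Equiv.swap 2 3 * Equiv.swap 1 2,
          Equiv.swap 3 4 * Equiv.swap 2 3 * Equiv.swap 1 2 * Equiv.swap 0 1] j := by
    intro j; fin_cases j
    · simp
    · simpa using hX4
    · simp [map_mul, hX2, hX4]
    · simp [map_mul, hX2, hX3, hX4]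
    · simp [map_mul, hX0, hX2, hX3, hX4]
  have hFFmap : ∀ t : Fin 2 × Fin 3 × Fin 4 × Fin 5,
      ρbar (FF (π (PresentedGroup.of 0)) (π (PresentedGroup.of 3))
        (π (PresentedGroup.of 2)) (π (PresentedGroup.of 4)) t)
      = FF (Equiv.swap 0 1) (Equiv.swap 1 2) (Equiv.swap 2 3) (Equiv.swap 3 4) t := by
    rintro ⟨j1, j2, j3, j4⟩
    unfold FF
    simp only [map_mul, hc1, hc2, hc3, hc4]
  -- injectivity on the quotient
  have main : ∀ q : GII ⧸ N, ρbar q = 1 → q = 1 := by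
    intro q hq
    obtain ⟨t, ht⟩ := hcover q (hgen q)
    have h' := hFFmap t
    rw [ht, hq] at h'
    have ht0 := hone t h'.symm
    rw [← ht, ht0]
    unfold FF
    simp
  -- conclude
  have hx1 : ρbar (π x) = 1 := by rw [hπ]; exact MonoidHom.mem_ker.mp hx
  have := main (π x) hx1
  exact (QuotientGroup.eq_one_iff x).mp this


end Stmt8
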